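/- Let V be a finite type of variables with n = card V, and let Ψ be a BST⁺ formula over V. If Ψ has a model, then for every natural number b ≥ n + 1, Ψ has a b-flat model. -/

import Mathlib

open Classical

noncomputable section

def natZ : ℕ → ZFSet
  | 0 => ∅
  | n+1 => insert (natZ n) (natZ n)

lemma rank_natZ (n : ℕ) : (natZ n).rank = n := by
  induction n with
  | zero => simp [natZ, ZFSet.rank_empty]
  | succ n ih =>
    rw [natZ, ZFSet.rank_insert, ih, Order.succ_eq_add_one, Nat.cast_succ,
      max_eq_left (le_of_lt (lt_add_one _))]

lemma natZ_injective : Function.Injective natZ := by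
  intro a b h
  have := congrArg ZFSet.rank h
  rw [rank_natZ, rank_natZ] at this
  exact_mod_cast this

lemma natZ_mem_natZ {k n : ℕ} (h : k < n) : natZ k ∈ natZ n := by
  induction n with
  | zero => omega
  | succ n ih =>
    rw [natZ, ZFSet.mem_insert_iff]
    rcases Nat.lt_succ_iff_lt_or_eq.mp h with h | h
    · exact Or.inr (ih h)
    · exact Or.inl (congrArg natZ h)

def setZ (b : ℕ) (T : Finset ℕ) : ZFSet :=
  ZFSet.sep (fun x => ∃ k ∈ T, x = natZ k) (natZ b)

lemma mem_setZ {b : ℕ} {T : Finset ℕ} (hT : ∀ k ∈ T, k < b) {x : ZFSet} :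
    x ∈ setZ b T ↔ ∃ k ∈ T, x = natZ k := by
  rw [setZ, ZFSet.mem_sep]
  constructor
  · exact fun h => h.2
  · rintro ⟨k, hk, rfl⟩
    exact ⟨natZ_mem_natZ (hT k hk), k, hk, rfl⟩

lemma setZ_injective {b : ℕ} {T₁ T₂ : Finset ℕ} (h₁ : ∀ k ∈ T₁, k < b)
    (h₂ : ∀ k ∈ T₂, k < b) (h : setZ b T₁ = setZ b T₂) : T₁ = T₂ := by
  ext k
  constructor
  · intro hk
    have : natZ k ∈ setZ b T₂ := h ▸ (mem_setZ h₁).mpr ⟨k, hk, rfl⟩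
    obtain ⟨k', hk', hkk⟩ := (mem_setZ h₂).mp this
    exact (natZ_injective hkk) ▸ hk'
  · intro hk
    have : natZ k ∈ setZ b T₁ := h ▸ (mem_setZ h₂).mpr ⟨k, hk, rfl⟩
    obtain ⟨k', hk', hkk⟩ := (mem_setZ h₁).mp this
    exact (natZ_injective hkk) ▸ hk'

lemma rank_setZ {b : ℕ} (hb : 1 ≤ b) {T : Finset ℕ} (hT : ∀ k ∈ T, k < b)
    (hmem : b - 1 ∈ T) : (setZ b T).rank = b := by
  apply le_antisymm
  · rw [ZFSet.rank_le_iff]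
    intro y hy
    obtain ⟨k, hk, rfl⟩ := (mem_setZ hT).mp hy
    rw [rank_natZ]
    exact_mod_cast hT k hk
  · have h1 : natZ (b-1) ∈ setZ b T := (mem_setZ hT).mpr ⟨b-1, hmem, rfl⟩
    have h2 := ZFSet.rank_lt_of_mem h1
    rw [rank_natZ] at h2
    have : ((b - 1 : ℕ) : Ordinal) + 1 ≤ (setZ b T).rank := Order.add_one_le_of_lt h2
    calc (b : Ordinal) = ((b-1 : ℕ) : Ordinal) + 1 := by
          rw [← Nat.cast_succ]; congr 1; omega
      _ ≤ _ := this

end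
/-- BST⁺ formulae over a variable type `V`: atoms `x = y \ z` combined with
conjunction, disjunction and negation. -/
inductive BSTFormula (V : Type*) : Type _
  | atom : V → V → V → BSTFormula V
  | and  : BSTFormula V → BSTFormula V → BSTFormula V
  | or   : BSTFormula V → BSTFormula V → BSTFormula V
  | not  : BSTFormula V → BSTFormula V

/-- Satisfaction of a BST⁺ formula by a set assignment. -/
def BSTFormula.Satisfies {V : Type*} (M : V → ZFSet) : BSTFormula V → Prop
  | .atom x y z => M x = M y \ M z
  | .and f g    => f.Satisfies M ∧ g.Satisfies M
  | .or f g     => f.Satisfies M ∨ g.Satisfies M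
  | .not f      => ¬ f.Satisfies M

/-- An assignment `M : V → ZFSet` is `b`-flat if every member of every value of `M`
has rank exactly `b`. -/
def IsFlat {V : Type*} (b : Ordinal) (M : V → ZFSet) : Prop :=
  ∀ v : V, ∀ u : ZFSet, u ∈ M v → u.rank = b

theorem exists_flat_model {V : Type*} [Fintype V] (n : ℕ) (hn : n = Fintype.card V)
    (Ψ : BSTFormula V) (hsat : ∃ M : V → ZFSet, Ψ.Satisfies M) :
    ∀ b : ℕ, n + 1 ≤ b → ∃ M : V → ZFSet, IsFlat (b : Ordinal) M ∧ Ψ.Satisfies M := by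
  classical
  obtain ⟨M0, hM0⟩ := hsat
  intro b hb
  have hb1 : 1 ≤ b := by omega
  let e : V ≃ Fin n := Fintype.equivFinOfCardEq hn.symm
  set pat : ZFSet → Set V := fun u => {v | u ∈ M0 v} with hpat
  set R : Set V → Prop := fun σ => ∃ u : ZFSet, pat u = σ with hRdef
  set enc : Set V → Finset ℕ :=
    fun σ => insert (b-1) ((Finset.univ.filter (· ∈ σ)).image (fun v => (e v : ℕ))) with hencdef
  have hbound : ∀ σ : Set V, ∀ k ∈ enc σ, k < b := by
    intro σ k hk
    simp only [hencdef, Finset.mem_insert, Finset.mem_image, Finset.mem_filter] at hk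
    rcases hk with rfl | ⟨w, _, rfl⟩
    · omega
    · have := (e w).is_lt; omega
  have henc_inj : ∀ σ₁ σ₂ : Set V, enc σ₁ = enc σ₂ → σ₁ = σ₂ := by
    intro σ₁ σ₂ h
    have key : ∀ σ : Set V, ∀ v : V, v ∈ σ ↔ ((e v : ℕ) ∈ enc σ) := by
      intro σ v
      simp only [hencdef, Finset.mem_insert, Finset.mem_image, Finset.mem_filter,
        Finset.mem_univ, true_and]
      constructor
      · intro hv; exact Or.inr ⟨v, hv, rfl⟩
      · rintro (h | ⟨w, hw, hww⟩)
        · have := (e v).is_lt; omega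
        · have : w = v := e.injective (Fin.val_injective hww)
          exact this ▸ hw
    ext v
    rw [key, key, h]
  set X : Set V → ZFSet := fun σ => setZ b (enc σ) with hXdef
  have hrankX : ∀ σ, (X σ).rank = (b : Ordinal) :=
    fun σ => rank_setZ hb1 (hbound σ) (by simp [hencdef])
  have hXinj : ∀ σ₁ σ₂ : Set V, X σ₁ = X σ₂ → σ₁ = σ₂ :=
    fun σ₁ σ₂ h => henc_inj _ _ (setZ_injective (hbound _) (hbound _) h)
  set M : V → ZFSet :=
    fun v => ZFSet.sep (fun x => ∃ σ, R σ ∧ v ∈ σ ∧ x = X σ) (ZFSet.powerset (natZ b)) with hMdef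
  have memM : ∀ (v : V) (x : ZFSet), x ∈ M v ↔ ∃ σ, R σ ∧ v ∈ σ ∧ x = X σ := by
    intro v x
    rw [hMdef, ZFSet.mem_sep]
    constructor
    · exact And.right
    · rintro ⟨σ, hσ, hv, rfl⟩
      refine ⟨ZFSet.mem_powerset.mpr ?_, σ, hσ, hv, rfl⟩
      intro z hz
      exact (ZFSet.mem_sep.mp hz).1
  refine ⟨M, ?_, ?_⟩
  · intro v u hu
    obtain ⟨σ, _, _, rfl⟩ := (memM v u).mp hu
    exact hrankX σ
  · suffices key : ∀ Φ : BSTFormula V, Φ.Satisfies M ↔ Φ.Satisfies M0 by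
      exact (key Ψ).mpr hM0
    intro Φ
    induction Φ with
    | and f g ihf ihg => simp only [BSTFormula.Satisfies, ihf, ihg]
    | or f g ihf ihg => simp only [BSTFormula.Satisfies, ihf, ihg]
    | not f ihf => simp only [BSTFormula.Satisfies, ihf]
    | atom x y z =>
      show (M x = M y \ M z) ↔ (M0 x = M0 y \ M0 z)
      have hA : (M0 x = M0 y \ M0 z) ↔ ∀ σ, R σ → (x ∈ σ ↔ y ∈ σ ∧ z ∉ σ) := by
        constructor
        · rintro h σ ⟨u, rfl⟩
          have := ZFSet.ext_iff.mp h u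
          rw [ZFSet.mem_sdiff] at this
          exact this
        · intro h
          apply ZFSet.ext; intro u
          rw [ZFSet.mem_sdiff]
          exact h (pat u) ⟨u, rfl⟩
      have hB : (M x = M y \ M z) ↔ ∀ σ, R σ → (x ∈ σ ↔ y ∈ σ ∧ z ∉ σ) := by
        constructor
        · intro h σ hσ
          have hmem : ∀ v : V, X σ ∈ M v ↔ v ∈ σ := by
            intro v
            rw [memM]
            constructor
            · rintro ⟨σ', hσ', hv, hXX⟩
              have hss : σ = σ' := hXinj _ _ hXX
              subst hss; exact hv
            · intro hv; exact ⟨σ, hσ, hv, rfl⟩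
          have := ZFSet.ext_iff.mp h (X σ)
          rw [ZFSet.mem_sdiff, hmem, hmem, hmem] at this
          exact this
        · intro h
          apply ZFSet.ext; intro u
          rw [ZFSet.mem_sdiff, memM, memM, memM]
          constructor
          · rintro ⟨σ, hσ, hx, rfl⟩
            obtain ⟨hy, hz⟩ := (h σ hσ).mp hx
            refine ⟨⟨σ, hσ, hy, rfl⟩, ?_⟩
            rintro ⟨σ', hσ', hz', hXX⟩
            have hss : σ = σ' := hXinj _ _ hXX
            subst hss; exact hz hz'
          · rintro ⟨⟨σ, hσ, hy, rfl⟩, hnz⟩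
            exact ⟨σ, hσ, (h σ hσ).mpr ⟨hy, fun hz => hnz ⟨σ, hσ, hz, rfl⟩⟩, rfl⟩
      rw [hB, hA]
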